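/- Fix n ≥ 2 and ε ∈ [1−1/n, 1]. Then D_{n,ε} ⊒ D_{n,μ} if and only if μ ∈ [1 − ε/(n−1), ε]. -/

import Mathlib

open Matrix BigOperators

def RowStochastic {a b : ℕ} (M : Matrix (Fin a) (Fin b) ℝ) : Prop :=
  (∀ i j, 0 ≤ M i j) ∧ ∀ i, ∑ j, M i j = 1

def UW {a b c d : ℕ} (C : Matrix (Fin a) (Fin b) ℝ) (D : Matrix (Fin c) (Fin d) ℝ) : Prop :=
  ∃ (L : Matrix (Fin a) (Fin c) ℝ) (R : Matrix (Fin d) (Fin b) ℝ),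
    RowStochastic L ∧ RowStochastic R ∧ C = L * D * R
noncomputable def Dmat (n : ℕ) (ε : ℝ) : Matrix (Fin n) (Fin n) ℝ :=
  Matrix.of fun i j => if i = j then 1 - ε else ε / (n - 1)

-- auxiliary lemmas

lemma rs_one (n : ℕ) : RowStochastic (1 : Matrix (Fin n) (Fin n) ℝ) := by
  constructor
  · intro i j
    by_cases h : i = j <;> simp [Matrix.one_apply, h]
  · intro i
    simp [Matrix.one_apply]

lemma rs_mul {a b c : ℕ} {M : Matrix (Fin a) (Fin b) ℝ} {N : Matrix (Fin b) (Fin c) ℝ}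
    (hM : RowStochastic M) (hN : RowStochastic N) : RowStochastic (M * N) := by
  constructor
  · intro i j
    rw [Matrix.mul_apply]
    exact Finset.sum_nonneg fun k _ => mul_nonneg (hM.1 i k) (hN.1 k j)
  · intro i
    calc ∑ j, (M * N) i j = ∑ j, ∑ k, M i k * N k j := by
          simp [Matrix.mul_apply]
    _ = ∑ k, ∑ j, M i k * N k j := Finset.sum_comm
    _ = ∑ k, M i k * ∑ j, N k j := by simp [Finset.mul_sum]
    _ = 1 := by simp [hN.2, hM.2 i]

lemma sum_ite_const {n : ℕ} (i : Fin n) (A B : ℝ) :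
    ∑ j : Fin n, (if i = j then A else B) = A + ((n:ℝ) - 1) * B := by
  rw [← Finset.add_sum_erase _ _ (Finset.mem_univ i)]
  have h1 : ∀ j ∈ Finset.univ.erase i, (if i = j then A else B) = B := by
    intro j hj
    rw [if_neg (Ne.symm (Finset.ne_of_mem_erase hj))]
  rw [Finset.sum_congr rfl h1, Finset.sum_const,
    Finset.card_erase_of_mem (Finset.mem_univ i)]
  simp only [if_pos rfl, Finset.card_univ, Fintype.card_fin, nsmul_eq_mul]
  have hpos : 1 ≤ n := i.pos
  push_cast [Nat.cast_sub hpos]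
  ring

lemma rs_dmat (n : ℕ) (hn : 2 ≤ n) {δ : ℝ} (h0 : 0 ≤ δ) (h1 : δ ≤ 1) :
    RowStochastic (Dmat n δ) := by
  have hn' : (2:ℝ) ≤ (n:ℝ) := by exact_mod_cast hn
  have hc : (0:ℝ) < (n:ℝ) - 1 := by linarith
  constructor
  · intro i j
    by_cases h : i = j
    · simp only [Dmat, Matrix.of_apply, if_pos h]
      linarith
    · simp only [Dmat, Matrix.of_apply, if_neg h]
      positivity
  · intro i
    have h0' : ∑ j, Dmat n δ i j
        = ∑ j : Fin n, (if i = j then 1 - δ else δ / ((n:ℝ)-1)) := rfl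
    rw [h0', sum_ite_const]
    field_simp
    ring

def Jm (n : ℕ) : Matrix (Fin n) (Fin n) ℝ := Matrix.of fun _ _ => 1

lemma Jm_mul_Jm (n : ℕ) : Jm n * Jm n = (n:ℝ) • Jm n := by
  ext i j
  simp [Jm, Matrix.mul_apply]

lemma dmat_decomp (n : ℕ) (hn : 2 ≤ n) (x : ℝ) :
    Dmat n x = (1 - x*(n:ℝ)/((n:ℝ)-1)) • (1 : Matrix (Fin n) (Fin n) ℝ)
      + (x/((n:ℝ)-1)) • Jm n := by
  have hn' : (2:ℝ) ≤ (n:ℝ) := by exact_mod_cast hn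
  have hc : ((n:ℝ) - 1) ≠ 0 := by linarith
  ext i j
  by_cases h : i = j
  · simp [Dmat, Jm, Matrix.one_apply, h]
    field_simp
    ring
  · simp [Dmat, Jm, Matrix.one_apply, h]

lemma mix_mul (n : ℕ) (a b a' b' : ℝ) :
    (a • (1 : Matrix (Fin n) (Fin n) ℝ) + b • Jm n) * (a' • 1 + b' • Jm n)
      = (a*a') • 1 + (a*b' + b*a' + (n:ℝ)*b*b') • Jm n := by
  simp only [add_mul, mul_add, smul_mul_assoc, mul_smul_comm, one_mul, mul_one,
    Jm_mul_Jm, smul_smul]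
  module

noncomputable def Pm (n : ℕ) [NeZero n] : Matrix (Fin n) (Fin n) ℝ :=
  Matrix.of fun i j => if j = i + 1 then 1 else 0

lemma rs_Pm (n : ℕ) [NeZero n] : RowStochastic (Pm n) := by
  constructor
  · intro i j
    by_cases h : j = i + 1 <;> simp [Pm, h]
  · intro i
    simp [Pm, Finset.sum_ite_eq']

lemma trace_bound (n : ℕ) (hn : 2 ≤ n) (ε : ℝ) (hε1 : 1 - 1/(n:ℝ) ≤ ε) (hε2 : ε ≤ 1)
    {S : Matrix (Fin n) (Fin n) ℝ} (hS : RowStochastic S) :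
    Matrix.trace (Dmat n ε * S) ≤ (n:ℝ) * (ε / ((n:ℝ)-1)) := by
  have hn' : (2:ℝ) ≤ (n:ℝ) := by exact_mod_cast hn
  have hc : (0:ℝ) < (n:ℝ) - 1 := by linarith
  have hn0 : (0:ℝ) < (n:ℝ) := by linarith
  have hε1' : (n:ℝ) - 1 ≤ ε * n := by
    have h := mul_le_mul_of_nonneg_right hε1 hn0.le
    have h2 : (1 - 1/(n:ℝ)) * n = (n:ℝ) - 1 := by field_simp
    rw [h2] at h
    linarith
  have hmax : ∀ i k : Fin n, Dmat n ε i k ≤ ε / ((n:ℝ)-1) := by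
    intro i k
    by_cases h : i = k
    · simp only [Dmat, Matrix.of_apply, if_pos h]
      rw [le_div_iff₀ hc]
      nlinarith
    · simp only [Dmat, Matrix.of_apply, if_neg h]
      exact le_rfl
  calc Matrix.trace (Dmat n ε * S) = ∑ i, ∑ k, Dmat n ε i k * S k i := by
        simp [Matrix.trace, Matrix.diag, Matrix.mul_apply]
  _ ≤ ∑ i, ∑ k, (ε/((n:ℝ)-1)) * S k i := by
        apply Finset.sum_le_sum
        intro i _
        apply Finset.sum_le_sum
        intro k _
        exact mul_le_mul_of_nonneg_right (hmax i k) (hS.1 k i)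
  _ = (ε/((n:ℝ)-1)) * ∑ k, ∑ i : Fin n, S k i := by
        rw [Finset.sum_comm, Finset.mul_sum]
        exact Finset.sum_congr rfl fun k _ => (Finset.mul_sum _ _ _).symm
  _ = (n:ℝ) * (ε/((n:ℝ)-1)) := by
        simp [hS.2]
        ring

/-- For ε in the antidistinguishability regime, D_{n,ε} ⊒ D_{n,μ} iff
μ ∈ [1 − ε/(n−1), ε]. -/
theorem Dmat_uw_iff_antidist (n : ℕ) (hn : 2 ≤ n) (ε μ : ℝ)
    (hε : ε ∈ Set.Icc (1 - 1/(n:ℝ)) 1) (hμ : μ ∈ Set.Icc (0:ℝ) 1) :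
    UW (Dmat n μ) (Dmat n ε) ↔ μ ∈ Set.Icc (1 - ε / (n - 1)) ε := by
  haveI : NeZero n := ⟨by omega⟩
  have hn' : (2:ℝ) ≤ (n:ℝ) := by exact_mod_cast hn
  have hc : (0:ℝ) < (n:ℝ) - 1 := by linarith
  have hn0 : (0:ℝ) < (n:ℝ) := by linarith
  obtain ⟨hε1, hε2⟩ := hε
  obtain ⟨hμ1, hμ2⟩ := hμ
  have hε1' : (n:ℝ) - 1 ≤ ε * n := by
    have h := mul_le_mul_of_nonneg_right hε1 hn0.le
    have h2 : (1 - 1/(n:ℝ)) * n = (n:ℝ) - 1 := by field_simp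
    rw [h2] at h
    linarith
  constructor
  · rintro ⟨L, R, hL, hR, hEq⟩
    have h1a : Matrix.trace (Dmat n μ) = (n:ℝ) * (1 - μ) := by
      have : ∀ i : Fin n, Dmat n μ i i = 1 - μ := by
        intro i; simp [Dmat]
      simp [Matrix.trace, Matrix.diag, this, Finset.sum_const]
      ring
    have h1b : Matrix.trace (Dmat n μ) ≤ (n:ℝ) * (ε / ((n:ℝ)-1)) := by
      rw [hEq, Matrix.trace_mul_comm, ← Matrix.mul_assoc, Matrix.trace_mul_comm]
      exact trace_bound n hn ε hε1 hε2 (rs_mul hR hL)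
    have key1 : 1 - μ ≤ ε / ((n:ℝ)-1) := by
      rw [h1a] at h1b
      have := (mul_le_mul_iff_right₀ hn0).mp h1b
      linarith
    have hone : (1 : Fin n) ≠ 0 := by
      intro h
      have := Fin.one_eq_zero_iff.mp h
      omega
    have hPdiag : ∀ i : Fin n, (Dmat n μ * Pm n) i i = μ / ((n:ℝ)-1) := by
      intro i
      have h0' : (Dmat n μ * Pm n) i i
          = ∑ k, Dmat n μ i k * (if i = k + 1 then (1:ℝ) else 0) := by
        simp [Matrix.mul_apply, Pm]
      rw [h0', Finset.sum_eq_single (i - 1)]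
      · rw [if_pos (sub_add_cancel i 1).symm, mul_one]
        have hne : i ≠ i - 1 := by
          intro h
          apply hone
          have h2 : i - (i - 1) = 0 := by rw [← h, sub_self]
          rwa [sub_sub_cancel] at h2
        simp [Dmat, if_neg hne]
      · intro k _ hk
        rw [if_neg, mul_zero]
        intro h
        apply hk
        rw [h, add_sub_cancel_right]
      · intro h
        exact absurd (Finset.mem_univ _) h
    have h2a : Matrix.trace (Dmat n μ * Pm n) = (n:ℝ) * (μ / ((n:ℝ)-1)) := by
      simp [Matrix.trace, Matrix.diag, hPdiag, Finset.sum_const]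
    have h2b : Matrix.trace (Dmat n μ * Pm n) ≤ (n:ℝ) * (ε / ((n:ℝ)-1)) := by
      rw [hEq, Matrix.mul_assoc, Matrix.mul_assoc, Matrix.trace_mul_comm,
        Matrix.mul_assoc]
      exact trace_bound n hn ε hε1 hε2 (rs_mul (rs_mul hR (rs_Pm n)) hL)
    have key2 : μ ≤ ε := by
      rw [h2a] at h2b
      have h3 := (mul_le_mul_iff_right₀ hn0).mp h2b
      have := (div_le_div_iff_of_pos_right hc).mp h3
      linarith
    exact ⟨by linarith, key2⟩
  · rintro ⟨h1, h2⟩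
    have h1c : ((n:ℝ)-1) - ε ≤ μ * ((n:ℝ)-1) := by
      have h := mul_le_mul_of_nonneg_right h1 hc.le
      have h2' : (1 - ε/((n:ℝ)-1)) * ((n:ℝ)-1) = ((n:ℝ)-1) - ε := by field_simp
      rw [h2'] at h
      linarith
    have hex : ∃ δ : ℝ, 0 ≤ δ ∧ δ ≤ 1 ∧
        (((n:ℝ)-1) - ε*n) * (((n:ℝ)-1) - δ*n) = (((n:ℝ)-1) - μ*n) * ((n:ℝ)-1) := by
      refine ⟨(ε - μ) * ((n:ℝ)-1) / (ε * n - ((n:ℝ)-1)), ?_, ?_, ?_⟩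
      · exact div_nonneg (mul_nonneg (by linarith) hc.le) (by linarith)
      · by_cases hd : ε * n - ((n:ℝ)-1) = 0
        · rw [hd, div_zero]; norm_num
        · rw [div_le_one (lt_of_le_of_ne (by linarith) (Ne.symm hd))]
          nlinarith
      · by_cases hd : ε * n - ((n:ℝ)-1) = 0
        · rw [hd, div_zero]
          have hεμ : μ = ε := by nlinarith
          rw [hεμ]
          nlinarith
        · have hdd : (ε - μ) * ((n:ℝ)-1) / (ε * n - ((n:ℝ)-1)) * (ε*n - ((n:ℝ)-1))
              = (ε - μ) * ((n:ℝ)-1) := div_mul_cancel₀ _ hd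
          linear_combination (n:ℝ) * hdd
    obtain ⟨δ, hδ0, hδ1, key⟩ := hex
    have hc0 : ((n:ℝ)-1) ≠ 0 := ne_of_gt hc
    have hA : (1 - ε*(n:ℝ)/((n:ℝ)-1)) * (1 - δ*(n:ℝ)/((n:ℝ)-1)) = 1 - μ*(n:ℝ)/((n:ℝ)-1) := by
      field_simp
      linear_combination key
    have hB : (1 - ε*(n:ℝ)/((n:ℝ)-1)) * (δ/((n:ℝ)-1)) + (ε/((n:ℝ)-1)) * (1 - δ*(n:ℝ)/((n:ℝ)-1))
        + (n:ℝ)*(ε/((n:ℝ)-1))*(δ/((n:ℝ)-1)) = μ/((n:ℝ)-1) := by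
      have hn0' : (n:ℝ) ≠ 0 := ne_of_gt hn0
      have key2 : (n:ℝ) * ((n:ℝ)*ε*δ + ((n:ℝ)-1)*(μ-ε-δ)) = 0 := by linear_combination key
      have key3 : (n:ℝ)*ε*δ + ((n:ℝ)-1)*(μ-ε-δ) = 0 :=
        (mul_eq_zero.mp key2).resolve_left hn0'
      field_simp
      linear_combination (-1:ℝ) * key3
    have hDD : Dmat n ε * Dmat n δ = Dmat n μ := by
      rw [dmat_decomp n hn ε, dmat_decomp n hn δ, dmat_decomp n hn μ, mix_mul, hA, hB]
    exact ⟨1, Dmat n δ, rs_one n, rs_dmat n hn hδ0 hδ1, by rw [Matrix.one_mul, hDD]⟩
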